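/- Let x_0 ≥ 1 and ℓ ≥ 1 be integers, κ > 0, and let e_1, e_2, … be independent random variables, each exponentially distributed with rate 1. Set c = max(x_0, ℓ). Then for every integer n ≥ 1 and every t ≥ 0, the probability that ∑_{i=1}^{n} e_i/(κ(x_0 + (i-1)ℓ)) ≤ t is at most (1 - e^{-cκt})^{n}. -/

import Mathlib

open MeasureTheory ProbabilityTheory Real Set

lemma anal_key (n : ℕ) {μ a t : ℝ} (hμ : 0 < μ) (ha : 0 < a)
    (haμ : a ≤ ((n : ℝ) + 1) * μ) (ht : 0 ≤ t) :
    ∫ s in (0:ℝ)..t, a * (exp (-(a * s)) * (1 - exp (-(μ * (t - s)))) ^ n)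
      ≤ (1 - exp (-(μ * t))) ^ (n + 1) := by
  have hWd : ∀ s : ℝ, HasDerivAt
      (fun s => (exp (-(μ * t)) * exp (-((n : ℝ) * μ * s)) - exp (-(a * s)))
        * (1 - exp (-(μ * (t - s)))) ^ n)
      ((exp (-(μ * t)) * (exp (-((n : ℝ) * μ * s)) * (-((n : ℝ) * μ))) - exp (-(a * s)) * (-a))
        * (1 - exp (-(μ * (t - s)))) ^ n
       + (exp (-(μ * t)) * exp (-((n : ℝ) * μ * s)) - exp (-(a * s)))
        * ((n : ℝ) * (1 - exp (-(μ * (t - s)))) ^ (n - 1) * -(exp (-(μ * (t - s))) * -(μ * -1))))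
      s := by
    intro s
    have h1 : HasDerivAt (fun s : ℝ => -((n : ℝ) * μ * s)) (-((n : ℝ) * μ)) s := by
      simpa using ((hasDerivAt_id s).const_mul (-((n : ℝ) * μ)))
    have h2 : HasDerivAt (fun s : ℝ => -(a * s)) (-a) s := by
      simpa using ((hasDerivAt_id s).const_mul (-a))
    have h3 : HasDerivAt (fun s : ℝ => -(μ * (t - s))) (-(μ * -1)) s :=
      (((hasDerivAt_id s).const_sub t).const_mul μ).neg
    exact ((h1.exp.const_mul (exp (-(μ * t)))).sub h2.exp).mul ((h3.exp.const_sub 1).pow n)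
  have hcont1 : Continuous fun s : ℝ => a * (exp (-(a * s)) * (1 - exp (-(μ * (t - s)))) ^ n) := by
    fun_prop
  have hcont2 : Continuous fun s : ℝ =>
      (exp (-(μ * t)) * (exp (-((n : ℝ) * μ * s)) * (-((n : ℝ) * μ))) - exp (-(a * s)) * (-a))
        * (1 - exp (-(μ * (t - s)))) ^ n
       + (exp (-(μ * t)) * exp (-((n : ℝ) * μ * s)) - exp (-(a * s)))
        * ((n : ℝ) * (1 - exp (-(μ * (t - s)))) ^ (n - 1) * -(exp (-(μ * (t - s))) * -(μ * -1))) := by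
    fun_prop
  have hptwise : ∀ s ∈ Icc (0:ℝ) t,
      a * (exp (-(a * s)) * (1 - exp (-(μ * (t - s)))) ^ n) ≤
      (exp (-(μ * t)) * (exp (-((n : ℝ) * μ * s)) * (-((n : ℝ) * μ))) - exp (-(a * s)) * (-a))
        * (1 - exp (-(μ * (t - s)))) ^ n
       + (exp (-(μ * t)) * exp (-((n : ℝ) * μ * s)) - exp (-(a * s)))
        * ((n : ℝ) * (1 - exp (-(μ * (t - s)))) ^ (n - 1) * -(exp (-(μ * (t - s))) * -(μ * -1))) := by
    rintro s ⟨hs0, hst⟩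
    rcases n with _ | m
    · norm_num [mul_comm]
    · have hut : exp (-(μ * t)) = exp (-(μ * (t - s))) * exp (-(μ * s)) := by
        rw [← Real.exp_add]; ring_nf
      have hns : exp (-((((m+1:ℕ)) : ℝ) * μ * s)) = exp (-(μ * s)) ^ (m + 1) := by
        rw [← Real.exp_nat_mul]; congr 1; push_cast; ring
      have hcmp : exp (-(μ * s)) ^ (m + 1) * exp (-(μ * s)) ≤ exp (-(a * s)) := by
        have h1 : exp (-(μ * s)) ^ (m + 1) * exp (-(μ * s)) = exp (((m + 2 : ℕ) : ℝ) * -(μ * s)) := by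
          rw [Real.exp_nat_mul]; ring
        rw [h1, Real.exp_le_exp]
        have haμ' : a ≤ ((m : ℝ) + 2) * μ := by push_cast at haμ; linarith
        have := mul_le_mul_of_nonneg_right haμ' hs0
        push_cast; nlinarith
      have hE1 : exp (-(μ * (t - s))) ≤ 1 := by
        rw [Real.exp_le_one_iff]; nlinarith
      have hE0 : (0:ℝ) < exp (-(μ * (t - s))) := Real.exp_pos _
      have hq : (0:ℝ) ≤ (1 - exp (-(μ * (t - s)))) ^ m := pow_nonneg (by linarith) m
      rw [hut, hns]
      simp only [Nat.add_sub_cancel, Nat.cast_add, Nat.cast_one]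
      have hprod : (0:ℝ) ≤ ((m:ℝ) + 1) * μ * (exp (-(μ * (t - s)))
          * ((1 - exp (-(μ * (t - s)))) ^ m
            * (exp (-(a * s)) - exp (-(μ * s)) ^ (m + 1) * exp (-(μ * s))))) := by
        have hm : (0:ℝ) ≤ (m:ℝ) + 1 := by positivity
        have h2 := sub_nonneg.mpr hcmp
        have := hE0.le
        positivity
      set v := exp (-(μ * (t - s))) with hv
      set u := exp (-(μ * s)) with hu
      set G := exp (-(a * s)) with hG
      have hid : (v * u * (u ^ (m + 1) * -(((m:ℝ) + 1) * μ)) - G * -a) * (1 - v) ^ (m + 1)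
          + (v * u * u ^ (m + 1) - G) * (((m:ℝ) + 1) * (1 - v) ^ m * -(v * -(μ * -1)))
          = a * (G * (1 - v) ^ (m + 1))
            + ((m:ℝ) + 1) * μ * (v * ((1 - v) ^ m * (G - u ^ (m + 1) * u))) := by
        ring
      rw [hid]
      linarith [hprod]
  have hmono := intervalIntegral.integral_mono_on (μ := MeasureTheory.volume) ht (hcont1.intervalIntegrable 0 t)
    (hcont2.intervalIntegrable 0 t) hptwise
  have hftc := intervalIntegral.integral_eq_sub_of_hasDerivAt (fun s _ => hWd s)
    (hcont2.intervalIntegrable 0 t)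
  rw [hftc] at hmono
  refine hmono.trans ?_
  have hWt : (exp (-(μ * t)) * exp (-((n : ℝ) * μ * t)) - exp (-(a * t)))
      * (1 - exp (-(μ * (t - t)))) ^ n ≤ 0 := by
    apply mul_nonpos_of_nonpos_of_nonneg
    · have h1 : exp (-(μ * t)) * exp (-((n : ℝ) * μ * t)) = exp (((n : ℝ) + 1) * -(μ * t)) := by
        rw [← Real.exp_add]; ring_nf
      rw [h1, sub_nonpos, Real.exp_le_exp]
      nlinarith
    · simp only [sub_self, mul_zero, neg_zero, Real.exp_zero]
      exact pow_nonneg le_rfl n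
  have hW0 : (exp (-(μ * t)) * exp (-((n : ℝ) * μ * 0)) - exp (-(a * 0)))
      * (1 - exp (-(μ * (t - 0)))) ^ n = -(1 - exp (-(μ * t))) ^ (n + 1) := by
    norm_num [pow_succ]; ring
  rw [hW0]
  simp only [sub_neg_eq_add]
  linarith


lemma bridge_key (n : ℕ) {μ A t : ℝ} (hμ : 0 < μ) (hA : 0 < A)
    (hAμ : A ≤ ((n : ℝ) + 1) * μ) (ht : 0 ≤ t) :
    ∫⁻ y, ENNReal.ofReal (if 0 ≤ t - y / A then (1 - exp (-(μ * (t - y / A)))) ^ n else 0)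
        ∂(expMeasure 1)
      ≤ ENNReal.ofReal ((1 - exp (-(μ * t))) ^ (n + 1)) := by
  set G : ℝ → ℝ := fun y => if 0 ≤ t - y / A then (1 - exp (-(μ * (t - y / A)))) ^ n else 0
    with hGdef
  have hGmeas : Measurable G := by
    apply Measurable.ite
    · exact measurableSet_le measurable_const (by fun_prop)
    · fun_prop
    · exact measurable_const
  have hG_nonneg : ∀ y, 0 ≤ G y := by
    intro y
    rw [hGdef]
    dsimp only
    split_ifs with h
    · have hle : exp (-(μ * (t - y / A))) ≤ 1 := by
        rw [Real.exp_le_one_iff]; nlinarith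
      exact pow_nonneg (by linarith) n
    · exact le_refl 0
  have hG_le_one : ∀ y, G y ≤ 1 := by
    intro y
    rw [hGdef]
    dsimp only
    split_ifs with h
    · have hle : exp (-(μ * (t - y / A))) ≤ 1 := by
        rw [Real.exp_le_one_iff]; nlinarith
      exact pow_le_one₀ (by linarith) (by nlinarith [Real.exp_pos (-(μ * (t - y / A)))])
    · norm_num
  have hmeq : expMeasure 1 = volume.withDensity (exponentialPDF 1) := rfl
  have hpdfmeas : Measurable (exponentialPDF 1) := (measurable_gammaPDFReal 1 1).ennreal_ofReal
  rw [hmeq, lintegral_withDensity_eq_lintegral_mul _ hpdfmeas hGmeas.ennreal_ofReal]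
  have hpoint : ∀ y, (exponentialPDF 1 * fun y => ENNReal.ofReal (G y)) y
      = ENNReal.ofReal ((Ici (0:ℝ)).indicator (fun y => exp (-y) * G y) y) := by
    intro y
    simp only [Pi.mul_apply]
    by_cases h : 0 ≤ y
    · rw [exponentialPDF_of_nonneg h, Set.indicator_of_mem (mem_Ici.2 h),
        ← ENNReal.ofReal_mul (by positivity)]
      norm_num
    · rw [exponentialPDF_of_neg (lt_of_not_ge h), Set.indicator_of_notMem (by simpa using h)]
      simp
  rw [lintegral_congr hpoint]
  have hIOn : IntegrableOn (fun y => exp (-y) * G y) (Ici 0) volume := by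
    have hbound : IntegrableOn (fun y : ℝ => exp (-1 * y)) (Ici (0:ℝ)) volume :=
      (integrableOn_Ici_iff_integrableOn_Ioi (by simp)).2 (exp_neg_integrableOn_Ioi 0 one_pos)
    refine Integrable.mono hbound ((by fun_prop : Measurable fun y => exp (-y) * G y)
      |>.aestronglyMeasurable) (ae_of_all _ fun y => ?_)
    rw [Real.norm_eq_abs, Real.norm_eq_abs,
      abs_of_nonneg (mul_nonneg (Real.exp_pos (-y)).le (hG_nonneg y)),
      abs_of_nonneg (Real.exp_pos (-1 * y)).le]
    have := hG_le_one y
    have := hG_nonneg y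
    have h1 : exp (-1 * y) = exp (-y) := by norm_num
    nlinarith [Real.exp_pos (-y)]
  have hint : Integrable ((Ici (0:ℝ)).indicator (fun y => exp (-y) * G y)) volume := by
    rw [integrable_indicator_iff measurableSet_Ici]
    exact hIOn
  have hnn : 0 ≤ᵐ[volume] (Ici (0:ℝ)).indicator (fun y => exp (-y) * G y) :=
    ae_of_all _ fun y => Set.indicator_nonneg
      (fun y _ => mul_nonneg (Real.exp_pos _).le (hG_nonneg y)) y
  rw [← ofReal_integral_eq_lintegral_ofReal hint hnn]
  apply ENNReal.ofReal_le_ofReal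
  rw [MeasureTheory.integral_indicator measurableSet_Ici, integral_Ici_eq_integral_Ioi]
  have hAt : (0:ℝ) ≤ A * t := by positivity
  have hsplit : Ioc (0:ℝ) (A * t) ∪ Ioi (A * t) = Ioi 0 := Ioc_union_Ioi_eq_Ioi hAt
  rw [← hsplit, setIntegral_union Ioc_disjoint_Ioi_same measurableSet_Ioi
    (hIOn.mono_set (fun x hx => hx.1.le))
    (hIOn.mono_set (fun x hx => hAt.trans (le_of_lt hx)))]
  have h2zero : ∫ y in Ioi (A * t), exp (-y) * G y = 0 := by
    apply setIntegral_eq_zero_of_forall_eq_zero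
    intro y hy
    have hy' : A * t < y := hy
    have hneg : ¬ (0 ≤ t - y / A) := by
      rw [not_le, sub_neg, lt_div_iff₀ hA]
      linarith [mul_comm A t]
    rw [hGdef]
    simp only [if_neg hneg, mul_zero]
  rw [h2zero, add_zero]
  have hcongr : ∫ y in Ioc 0 (A * t), exp (-y) * G y
      = ∫ y in Ioc 0 (A * t), exp (-y) * (1 - exp (-(μ * (t - y / A)))) ^ n := by
    apply setIntegral_congr_fun measurableSet_Ioc
    intro y hy
    have hy2 : y ≤ A * t := hy.2
    have hcond : 0 ≤ t - y / A := by
      rw [sub_nonneg, div_le_iff₀ hA]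
      linarith [mul_comm A t]
    rw [hGdef]
    simp only [if_pos hcond]
  rw [hcongr, ← intervalIntegral.integral_of_le hAt]
  have hsub : Set.EqOn (fun y => exp (-y) * (1 - exp (-(μ * (t - y / A)))) ^ n)
      (fun y => (fun s => exp (-(A * s)) * (1 - exp (-(μ * (t - s)))) ^ n) (y / A))
      (Set.uIcc 0 (A * t)) := by
    intro y _
    dsimp only
    rw [mul_div_cancel₀ y hA.ne']
  rw [intervalIntegral.integral_congr hsub,
    intervalIntegral.integral_comp_div (fun s => exp (-(A * s)) * (1 - exp (-(μ * (t - s)))) ^ n)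
      hA.ne']
  rw [zero_div, mul_div_cancel_left₀ t hA.ne', smul_eq_mul, ← intervalIntegral.integral_const_mul]
  have := anal_key n hμ hA hAμ ht
  calc ∫ s in (0:ℝ)..t, A * (exp (-(A * s)) * (1 - exp (-(μ * (t - s)))) ^ n)
      ≤ (1 - exp (-(μ * t))) ^ (n + 1) := anal_key n hμ hA hAμ ht


lemma key_ind {Ω : Type*} [MeasurableSpace Ω] (P : Measure Ω) [IsProbabilityMeasure P]
    (μ : ℝ) (hμ : 0 < μ) (f : ℕ → Ω → ℝ) (hf : ∀ i, Measurable (f i))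
    (hindep : iIndepFun f P)
    (hlaw : ∀ i, P.map (f i) = expMeasure 1)
    (A : ℕ → ℝ) (hA : ∀ i, 1 ≤ i → 0 < A i) (hAμ : ∀ i, 1 ≤ i → A i ≤ i * μ) :
    ∀ n, ∀ t : ℝ, 0 ≤ t →
      P {ω | ∑ i ∈ Finset.Icc 1 n, f i ω / A i ≤ t}
        ≤ ENNReal.ofReal ((1 - exp (-(μ * t))) ^ n) := by
  have hfnn : ∀ i, ∀ᵐ ω ∂P, 0 ≤ f i ω := by
    intro i
    rw [ae_iff]
    have hset : {ω | ¬ 0 ≤ f i ω} = f i ⁻¹' (Iio 0) := by ext ω; simp [not_le]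
    rw [hset, ← Measure.map_apply (hf i) measurableSet_Iio, hlaw i]
    show (volume.withDensity (exponentialPDF 1)) (Iio 0) = 0
    rw [withDensity_apply _ measurableSet_Iio]
    exact lintegral_exponentialPDF_of_nonpos le_rfl
  intro n
  induction n with
  | zero =>
    intro t ht
    rw [Finset.Icc_eq_empty (by omega)]
    simp only [Finset.sum_empty, pow_zero, ENNReal.ofReal_one]
    have huniv : {ω : Ω | (0:ℝ) ≤ t} = Set.univ := by ext ω; simp [ht]
    rw [huniv]
    exact le_of_eq measure_univ
  | succ n ih =>
    intro t ht
    set S : Ω → ℝ := fun ω => ∑ i ∈ Finset.Icc 1 n, f i ω / A i with hS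
    set X : Ω → ℝ := fun ω => f (n+1) ω / A (n+1) with hX
    have hSm : Measurable S := Finset.measurable_sum _ (fun i _ => (hf i).div_const _)
    have hXm : Measurable X := (hf (n+1)).div_const _
    have hAn : 0 < A (n+1) := hA (n+1) (by omega)
    have hsetev : {ω | ∑ i ∈ Finset.Icc 1 (n+1), f i ω / A i ≤ t} = {ω | S ω + X ω ≤ t} := by
      ext ω
      simp only [Set.mem_setOf_eq, hS, hX]
      rw [Finset.sum_Icc_succ_top (by omega : 1 ≤ n + 1)]
    rw [hsetev]
    have hFind : iIndepFun (fun i => (fun x => x / A i) ∘ f i) P :=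
      hindep.comp _ (fun i => measurable_id.div_const (A i))
    have hSX : IndepFun S X P := by
      have h := hFind.indepFun_finsetSum_of_notMem (fun i => (hf i).div_const _)
          (s := Finset.Icc 1 n) (i := n+1) (by simp)
      have hs : (∑ j ∈ Finset.Icc 1 n, (fun x => x / A j) ∘ f j) = S := by
        funext ω; simp [hS, Finset.sum_apply]
      rwa [hs] at h
    have hXS : IndepFun X S P := hSX.symm
    haveI : IsProbabilityMeasure (P.map S) := Measure.isProbabilityMeasure_map hSm.aemeasurable
    haveI : IsProbabilityMeasure (P.map X) := Measure.isProbabilityMeasure_map hXm.aemeasurable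
    have hsetm : MeasurableSet {p : ℝ × ℝ | p.2 + p.1 ≤ t} :=
      measurableSet_le (by fun_prop) measurable_const
    have hmap : P.map (fun ω => (X ω, S ω)) = (P.map X).prod (P.map S) :=
      (indepFun_iff_map_prod_eq_prod_map_map hXm.aemeasurable hSm.aemeasurable).mp hXS
    have h1 : ((P.map X).prod (P.map S)) {p : ℝ × ℝ | p.2 + p.1 ≤ t}
        = P {ω | S ω + X ω ≤ t} := by
      rw [← hmap, Measure.map_apply (hXm.prodMk hSm) hsetm]
      rfl
    rw [← h1, Measure.prod_apply hsetm]
    have h2 : ∀ x : ℝ, (Prod.mk x ⁻¹' {p : ℝ × ℝ | p.2 + p.1 ≤ t}) = Iic (t - x) := by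
      intro x; ext y; simp [le_sub_iff_add_le]
    simp_rw [h2]
    have hdiv : Measurable fun y : ℝ => y / A (n+1) := measurable_id.div_const _
    have hXmap : P.map X = (expMeasure 1).map (fun y => y / A (n+1)) := by
      have hcomp : X = (fun y => y / A (n+1)) ∘ f (n+1) := rfl
      rw [hcomp, ← Measure.map_map hdiv (hf (n+1)), hlaw (n+1)]
    have hmeasfun : Measurable (fun x : ℝ => (P.map S) (Iic (t - x))) := by
      apply Antitone.measurable
      intro x y hxy
      exact measure_mono (Iic_subset_Iic.2 (by linarith))
    rw [hXmap, lintegral_map hmeasfun hdiv]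
    have hSnn : ∀ᵐ ω ∂P, 0 ≤ S ω := by
      have hall : ∀ᵐ ω ∂P, ∀ i : ℕ, 0 ≤ f i ω := ae_all_iff.2 hfnn
      filter_upwards [hall] with ω hω
      exact Finset.sum_nonneg fun i hi => div_nonneg (hω i) (hA i (Finset.mem_Icc.1 hi).1).le
    have hbound : ∀ y : ℝ, (P.map S) (Iic (t - y / A (n+1)))
        ≤ ENNReal.ofReal (if 0 ≤ t - y / A (n+1)
            then (1 - exp (-(μ * (t - y / A (n+1))))) ^ n else 0) := by
      intro y
      rw [Measure.map_apply hSm measurableSet_Iic]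
      split_ifs with h
      · exact ih (t - y / A (n+1)) h
      · have h0 : P (S ⁻¹' Iic (t - y / A (n+1))) = 0 := by
          apply measure_mono_null _ (ae_iff.mp hSnn)
          intro ω hω
          simp only [Set.mem_preimage, Set.mem_Iic] at hω
          simp only [Set.mem_setOf_eq, not_le]
          linarith [not_le.mp h]
        simp [h0]
    calc ∫⁻ y, (P.map S) (Iic (t - y / A (n+1))) ∂(expMeasure 1)
        ≤ ∫⁻ y, ENNReal.ofReal (if 0 ≤ t - y / A (n+1)
            then (1 - exp (-(μ * (t - y / A (n+1))))) ^ n else 0) ∂(expMeasure 1) :=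
          lintegral_mono hbound
      _ ≤ ENNReal.ofReal ((1 - exp (-(μ * t))) ^ (n + 1)) := by
          refine bridge_key n hμ hAn ?_ ht
          have h3 := hAμ (n+1) (by omega)
          push_cast at h3 ⊢
          linarith


/-- For integers `x₀, ℓ ≥ 1`, `κ > 0`, and independent rate-1
exponential random variables `e 1, e 2, …`, with `c = max x₀ ℓ`, for every
`n ≥ 1` and `t ≥ 0`,
`P(∑_{i=1}^n e i / (κ (x₀ + (i-1) ℓ)) ≤ t) ≤ (1 - e^{-cκt})^n`. -/
theorem stmt3 {Ω : Type*} [MeasurableSpace Ω] (P : Measure Ω) [IsProbabilityMeasure P]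
    (x₀ ℓ : ℕ) (hx₀ : 1 ≤ x₀) (hℓ : 1 ≤ ℓ) (κ : ℝ) (hκ : 0 < κ)
    (e : ℕ → Ω → ℝ) (he_meas : ∀ i, Measurable (e i))
    (he_indep : iIndepFun e P)
    (he_law : ∀ i, P.map (e i) = expMeasure 1)
    (c : ℕ) (hc : c = max x₀ ℓ)
    (n : ℕ) (hn : 1 ≤ n) (t : ℝ) (ht : 0 ≤ t) :
    P {ω | ∑ i ∈ Finset.Icc 1 n, e i ω / (κ * (x₀ + (i - 1) * ℓ)) ≤ t}
      ≤ ENNReal.ofReal ((1 - Real.exp (-(c : ℝ) * κ * t)) ^ n) := by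
  have hcx : (x₀ : ℝ) ≤ (c : ℝ) := by exact_mod_cast hc ▸ le_max_left x₀ ℓ
  have hcl : (ℓ : ℝ) ≤ (c : ℝ) := by exact_mod_cast hc ▸ le_max_right x₀ ℓ
  have hx1 : (1 : ℝ) ≤ (x₀ : ℝ) := by exact_mod_cast hx₀
  have hl1 : (1 : ℝ) ≤ (ℓ : ℝ) := by exact_mod_cast hℓ
  have hμ : 0 < (c : ℝ) * κ := by
    apply mul_pos _ hκ
    linarith
  have hbd := key_ind P ((c : ℝ) * κ) hμ e he_meas he_indep he_law
      (fun i => κ * ((x₀ : ℝ) + ((i : ℝ) - 1) * (ℓ : ℝ)))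
      (fun i hi => by
        have h1 : (1 : ℝ) ≤ (i : ℝ) := by exact_mod_cast hi
        apply mul_pos hκ
        nlinarith)
      (fun i hi => by
        have h1 : (1 : ℝ) ≤ (i : ℝ) := by exact_mod_cast hi
        have h2 : (0 : ℝ) ≤ κ * (((i : ℝ) - 1) * ((c : ℝ) - (ℓ : ℝ))) := by
          apply mul_nonneg hκ.le; nlinarith
        have h3 : (0 : ℝ) ≤ κ * ((c : ℝ) - (x₀ : ℝ)) := by
          apply mul_nonneg hκ.le; linarith
        show κ * ((x₀ : ℝ) + ((i : ℝ) - 1) * (ℓ : ℝ)) ≤ (i : ℝ) * ((c : ℝ) * κ)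
        nlinarith)
      n t ht
  have hexp : -(c : ℝ) * κ * t = -((c : ℝ) * κ * t) := by ring
  rw [hexp]
  exact hbd
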